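/- Suppose 0 < p < q < ∞. If ‖·‖_X is an admissible extended-value quasinorm on the Borel functions of a compact Hausdorff space Ω satisfying a crude upper p-estimate with constant a and a crude lower q-estimate with constant b, then there is an admissible extended-value quasinorm ‖·‖_Y satisfying an upper p-estimate (constant 1) and a lower q-estimate (constant 1) such that ‖f‖_X ≤ ‖f‖_Y ≤ ab ‖f‖_X for all Borel functions f. -/

import Mathlib

open Set Filter Topology MeasureTheory ENNReal

/-- An admissible extended-value quasinorm on the Borel functions of `Ω`. -/
structure AdmissibleQuasinorm (Ω : Type*) [TopologicalSpace Ω] [MeasurableSpace Ω] where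
  N : (Ω → ℝ) → ℝ≥0∞
  mono : ∀ f g : Ω → ℝ, Measurable f → Measurable g →
    (∀ x, |f x| ≤ |g x|) → N f ≤ N g
  smul : ∀ (α : ℝ) (f : Ω → ℝ), Measurable f →
    N (fun x => α * f x) = ENNReal.ofReal |α| * N f
  quasi : ∃ C : ℝ≥0∞, ∀ f g : Ω → ℝ, Measurable f → Measurable g →
    (∀ x, 0 ≤ f x) → (∀ x, 0 ≤ g x) → (∀ x, f x = 0 ∨ g x = 0) →
    N (fun x => f x + g x) ≤ C * (N f + N g)
  exists_pos : ∃ u : Ω → ℝ, Measurable u ∧ (∀ x, 0 < u x) ∧ 0 < N u ∧ N u < ⊤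
  (cont : ∀ (f : ℕ → Ω → ℝ) (g : Ω → ℝ), (∀ n, Measurable (f n)) → Measurable g →
    (∀ n x, 0 ≤ f n x) → (∀ n x, f n x ≤ f (n + 1) x) →
    (∀ x, Tendsto (fun n => f n x) atTop (𝓝 (g x))) →
    Tendsto (fun n => N (f n)) atTop (𝓝 (N g)))

/-- `f₁, …, fₙ` are disjointly supported. -/
def DisjSupp {Ω : Type*} {n : ℕ} (f : Fin n → Ω → ℝ) : Prop :=
  ∀ i j, i ≠ j → ∀ x, f i x = 0 ∨ f j x = 0

/-- A crude upper `p`-estimate with constant `a`. -/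
def CrudeUpper {Ω : Type*} [TopologicalSpace Ω] [MeasurableSpace Ω]
    (X : AdmissibleQuasinorm Ω) (p a : ℝ) : Prop :=
  ∀ (n : ℕ) (f : Fin n → Ω → ℝ), (∀ i, Measurable (f i)) → DisjSupp f →
    X.N (fun x => ∑ i, f i x) ≤ ENNReal.ofReal a * (∑ i, X.N (f i) ^ p) ^ (1 / p)

/-- A crude lower `q`-estimate with constant `b`. -/
def CrudeLower {Ω : Type*} [TopologicalSpace Ω] [MeasurableSpace Ω]
    (X : AdmissibleQuasinorm Ω) (q b : ℝ) : Prop :=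
  ∀ (n : ℕ) (f : Fin n → Ω → ℝ), (∀ i, Measurable (f i)) → DisjSupp f →
    (∑ i, X.N (f i) ^ q) ^ (1 / q) ≤ ENNReal.ofReal b * X.N (fun x => ∑ i, f i x)

set_option linter.unusedSectionVars false

namespace Renorm3

/-! ### ℝ≥0∞ rpow helpers -/

theorem iInf_rpow {ι : Sort*} (x : ι → ℝ≥0∞) {r : ℝ} (hr : 0 < r) :
    (⨅ i, x i) ^ r = ⨅ i, x i ^ r :=
  (ENNReal.orderIsoRpow r hr).map_iInf x

theorem iSup_rpow {ι : Sort*} (x : ι → ℝ≥0∞) {r : ℝ} (hr : 0 < r) :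
    (⨆ i, x i) ^ r = ⨆ i, x i ^ r :=
  (ENNReal.orderIsoRpow r hr).map_iSup x

theorem rpow_rpow_inv (x : ℝ≥0∞) {r : ℝ} (hr : r ≠ 0) : (x ^ r) ^ (1 / r) = x := by
  rw [← ENNReal.rpow_mul, mul_one_div_cancel hr, ENNReal.rpow_one]

theorem rpow_inv_rpow (x : ℝ≥0∞) {r : ℝ} (hr : r ≠ 0) : (x ^ (1 / r)) ^ r = x := by
  rw [← ENNReal.rpow_mul, one_div_mul_cancel hr, ENNReal.rpow_one]

variable {Ω : Type*} [TopologicalSpace Ω] [MeasurableSpace Ω]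

/-- Disjointness of supports of two functions. -/
def Disj (u v : Ω → ℝ) : Prop := ∀ x, u x = 0 ∨ v x = 0

/-- A finite decomposition of `f` into disjointly supported measurable pieces. -/
structure Dec (f : Ω → ℝ) where
  n : ℕ
  F : Fin n → Ω → ℝ
  meas : ∀ i, Measurable (F i)
  disj : DisjSupp F
  sum : ∀ x, ∑ i, F i x = f x

/-- The singleton decomposition. -/
def Dec.single {f : Ω → ℝ} (hf : Measurable f) : Dec f where
  n := 1
  F := fun _ => f
  meas := fun _ => hf
  disj := fun i j hij => absurd (Subsingleton.elim i j) hij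
  sum := fun x => by simp

instance decNonempty {f : Ω → ℝ} [hf : Fact (Measurable f)] : Nonempty (Dec f) :=
  ⟨Dec.single hf.out⟩

theorem Dec.piece_eq {f : Ω → ℝ} (d : Dec f) {i : Fin d.n} {x : Ω}
    (hx : d.F i x ≠ 0) : f x = d.F i x := by
  rw [← d.sum x]
  exact Finset.sum_eq_single i
    (fun j _ hj => (d.disj j i hj x).resolve_right hx)
    (fun h => absurd (Finset.mem_univ i) h)

/-- Support of a piece is inside the support of `f`. -/
theorem Dec.piece_support {f : Ω → ℝ} (d : Dec f) {i : Fin d.n} {x : Ω}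
    (hx : d.F i x ≠ 0) : f x ≠ 0 := by
  rw [d.piece_eq hx]; exact hx

/-- Appending two decompositions of disjointly supported functions. -/
def Dec.append {u v : Ω → ℝ} (hd : Disj u v) (d : Dec u) (e : Dec v) :
    Dec (fun x => u x + v x) where
  n := d.n + e.n
  F := Fin.addCases d.F e.F
  meas := fun i => by
    induction i using Fin.addCases with
    | left i => simpa using d.meas i
    | right i => simpa using e.meas i
  disj := by
    intro i j hij x
    induction i using Fin.addCases with
    | left i' =>
      induction j using Fin.addCases with
      | left j' =>
        simpa using d.disj i' j' (fun h => hij (congrArg _ h)) x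
      | right j' =>
        simp only [Fin.addCases_left, Fin.addCases_right]
        by_cases h : d.F i' x = 0
        · exact Or.inl h
        · refine Or.inr (by_contra fun h2 => ?_)
          exact (hd x).elim (d.piece_support h) (e.piece_support h2)
    | right i' =>
      induction j using Fin.addCases with
      | left j' =>
        simp only [Fin.addCases_left, Fin.addCases_right]
        by_cases h : e.F i' x = 0
        · exact Or.inl h
        · refine Or.inr (by_contra fun h2 => ?_)
          exact (hd x).elim (d.piece_support h2) (e.piece_support h)
      | right j' =>
        simpa using e.disj i' j' (fun h => hij (congrArg _ h)) x
  sum := fun x => by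
    rw [Fin.sum_univ_add]
    simp only [Fin.addCases_left, Fin.addCases_right, d.sum x, e.sum x]


/-! ### First-index support sets of a decomposition -/

/-- `S d i` is the set where the `i`-th piece is the first nonvanishing piece. -/
def Dec.S {f : Ω → ℝ} (d : Dec f) (i : Fin d.n) : Set Ω :=
  {x | d.F i x ≠ 0 ∧ ∀ j, j < i → d.F j x = 0}

theorem Dec.measurableSet_S {f : Ω → ℝ} (d : Dec f) (i : Fin d.n) :
    MeasurableSet (d.S i) := by
  have h1 : MeasurableSet {x | d.F i x ≠ 0} :=
    ((d.meas i) (measurableSet_singleton 0)).compl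
  have h2 : MeasurableSet (⋂ (j : {j : Fin d.n // j < i}), {x | d.F j.1 x = 0}) :=
    MeasurableSet.iInter fun j => (d.meas j.1) (measurableSet_singleton 0)
  have : d.S i = {x | d.F i x ≠ 0} ∩ ⋂ (j : {j : Fin d.n // j < i}), {x | d.F j.1 x = 0} := by
    ext x
    simp only [Dec.S, Set.mem_setOf_eq, Set.mem_inter_iff, Set.mem_iInter, Subtype.forall]
  rw [this]; exact h1.inter h2

theorem Dec.mem_S_iff {f : Ω → ℝ} (d : Dec f) {i : Fin d.n} {x : Ω} :
    x ∈ d.S i ↔ d.F i x ≠ 0 := by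
  constructor
  · exact fun h => h.1
  · intro h
    exact ⟨h, fun j hj => (d.disj j i (ne_of_lt hj) x).resolve_right h⟩

theorem Dec.indicator_S_eq {f : Ω → ℝ} (d : Dec f) (i : Fin d.n) :
    (d.S i).indicator f = d.F i := by
  funext x
  by_cases h : x ∈ d.S i
  · rw [Set.indicator_of_mem h, d.piece_eq (d.mem_S_iff.1 h)]
  · rw [Set.indicator_of_notMem h]
    by_contra h2
    exact h (d.mem_S_iff.2 fun h3 => h2 h3.symm)

theorem Dec.S_disjoint {f : Ω → ℝ} (d : Dec f) {i j : Fin d.n} (hij : i ≠ j) {x : Ω}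
    (hi : x ∈ d.S i) : x ∉ d.S j := fun hj =>
  (d.disj i j hij x).elim (d.mem_S_iff.1 hi) (d.mem_S_iff.1 hj)

/-- On the support of `f`, the first-index sets form a partition. -/
theorem Dec.exists_mem_S {f : Ω → ℝ} (d : Dec f) {x : Ω} (hx : f x ≠ 0) :
    ∃ i, x ∈ d.S i := by
  classical
  have : ∃ i, d.F i x ≠ 0 := by
    by_contra h
    push_neg at h
    exact hx (by rw [← d.sum x, Finset.sum_eq_zero fun i _ => h i])
  obtain ⟨i, hi⟩ := this
  set s : Finset (Fin d.n) := Finset.univ.filter (fun j => d.F j x ≠ 0) with hs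
  have hne : s.Nonempty := ⟨i, by simp [hs, hi]⟩
  refine ⟨s.min' hne, ?_⟩
  have h1 := Finset.mem_filter.1 (s.min'_mem hne)
  refine ⟨h1.2, fun j hj => ?_⟩
  by_contra h2
  exact absurd (s.min'_le j (by simp [hs, h2])) (not_le.2 hj)

/-- Sum of indicators of the `S d i` applied to any function supported in the support
of `f` recovers that function. -/
theorem Dec.sum_indicator_S {f g : Ω → ℝ} (d : Dec f)
    (hg : ∀ x, g x ≠ 0 → f x ≠ 0) (x : Ω) :
    ∑ i, (d.S i).indicator g x = g x := by
  by_cases hx : f x = 0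
  · have hgx : g x = 0 := by
      by_contra h; exact (hg x h) hx
    have hnot : ∀ i, x ∉ d.S i := by
      intro i hmem
      exact (d.piece_support (d.mem_S_iff.1 hmem)) hx
    rw [hgx]
    exact Finset.sum_eq_zero fun i _ => Set.indicator_of_notMem (hnot i) g
  · obtain ⟨i, hi⟩ := d.exists_mem_S hx
    rw [Finset.sum_eq_single i
      (fun j _ hj => Set.indicator_of_notMem (d.S_disjoint hj.symm hi) g)
      (fun h => absurd (Finset.mem_univ i) h)]
    exact Set.indicator_of_mem hi g

/-- Transfer a decomposition of `g` to a decomposition of any `f` supported inside `g`. -/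
noncomputable def Dec.transfer {g : Ω → ℝ} (d : Dec g) (f : Ω → ℝ) (hf : Measurable f)
    (hfg : ∀ x, f x ≠ 0 → g x ≠ 0) : Dec f where
  n := d.n
  F := fun i => (d.S i).indicator f
  meas := fun i => hf.indicator (d.measurableSet_S i)
  disj := fun i j hij x => by
    by_cases h : x ∈ d.S i
    · exact Or.inr (Set.indicator_of_notMem (d.S_disjoint hij h) f)
    · exact Or.inl (Set.indicator_of_notMem h f)
  sum := d.sum_indicator_S hfg


/-! ### Scaling a decomposition -/

def Dec.smulDec {f : Ω → ℝ} (c : ℝ) (d : Dec f) : Dec (fun x => c * f x) where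
  n := d.n
  F := fun i x => c * d.F i x
  meas := fun i => (d.meas i).const_mul c
  disj := fun i j hij x => by
    rcases d.disj i j hij x with h | h
    · exact Or.inl (by simp [h])
    · exact Or.inr (by simp [h])
  sum := fun x => by rw [← Finset.mul_sum, d.sum x]

section GoodDef

variable (X : AdmissibleQuasinorm Ω) (p a : ℝ)

/-- Functionals with the exact upper `p`-estimate, equivalent to `X` with constant `a`. -/
structure Good (V : (Ω → ℝ) → ℝ≥0∞) : Prop where
  mono : ∀ ⦃f g : Ω → ℝ⦄, Measurable f → Measurable g → (∀ x, |f x| ≤ |g x|) → V f ≤ V g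
  smul : ∀ (c : ℝ) (f : Ω → ℝ), Measurable f →
    V (fun x => c * f x) = ENNReal.ofReal |c| * V f
  upper : ∀ ⦃u v : Ω → ℝ⦄, Measurable u → Measurable v → (∀ x, 0 ≤ u x) → (∀ x, 0 ≤ v x) →
    Disj u v → V (fun x => u x + v x) ^ p ≤ V u ^ p + V v ^ p
  le_X : ∀ ⦃f : Ω → ℝ⦄, Measurable f → V f ≤ X.N f
  X_le : ∀ ⦃f : Ω → ℝ⦄, Measurable f → X.N f ≤ ENNReal.ofReal a * V f

end GoodDef

variable {X : AdmissibleQuasinorm Ω} {p q a b : ℝ}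

theorem Good.abs {V : (Ω → ℝ) → ℝ≥0∞} (G : Good X p a V) {f : Ω → ℝ} (hf : Measurable f) :
    V (fun x => |f x|) = V f :=
  le_antisymm (G.mono hf.abs hf (fun x => by simp))
    (G.mono hf hf.abs (fun x => by simp))

theorem mono_abs {V : (Ω → ℝ) → ℝ≥0∞}
    (hm : ∀ ⦃f g : Ω → ℝ⦄, Measurable f → Measurable g → (∀ x, |f x| ≤ |g x|) → V f ≤ V g)
    {f : Ω → ℝ} (hf : Measurable f) : V (fun x => |f x|) = V f :=
  le_antisymm (hm hf.abs hf (fun x => by simp)) (hm hf hf.abs (fun x => by simp))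

/-- To establish the scaling property, an inequality suffices. -/
theorem smul_of_le {V : (Ω → ℝ) → ℝ≥0∞}
    (h : ∀ (c : ℝ) (f : Ω → ℝ), Measurable f →
      V (fun x => c * f x) ≤ ENNReal.ofReal |c| * V f) :
    ∀ (c : ℝ) (f : Ω → ℝ), Measurable f →
      V (fun x => c * f x) = ENNReal.ofReal |c| * V f := by
  intro c f hf
  rcases eq_or_ne c 0 with rfl | hc
  · refine le_antisymm (by simpa using h 0 f hf) (by simp)
  · refine le_antisymm (h c f hf) ?_
    have h2 := h c⁻¹ (fun x => c * f x) (hf.const_mul c)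
    have hfe : (fun x => c⁻¹ * (c * f x)) = f := funext fun x => by
      rw [← mul_assoc, inv_mul_cancel₀ hc, one_mul]
    rw [hfe] at h2
    calc ENNReal.ofReal |c| * V f
        ≤ ENNReal.ofReal |c| * (ENNReal.ofReal |c⁻¹| * V (fun x => c * f x)) :=
          mul_le_mul_right h2 _
      _ = V (fun x => c * f x) := by
          rw [← mul_assoc, ← ENNReal.ofReal_mul (abs_nonneg c), abs_inv,
            mul_inv_cancel₀ (abs_ne_zero.2 hc), ENNReal.ofReal_one, one_mul]

/-! ### The infimum functional `M` -/

/-- `p`-th power version of the greatest minorant of `X` with an exact upper `p`-estimate. -/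
noncomputable def Mp (X : AdmissibleQuasinorm Ω) (p : ℝ) (f : Ω → ℝ) : ℝ≥0∞ :=
  ⨅ d : Dec f, ∑ i, X.N (d.F i) ^ p

/-- The greatest minorant of `X` with an exact upper `p`-estimate. -/
noncomputable def MM (X : AdmissibleQuasinorm Ω) (p : ℝ) (f : Ω → ℝ) : ℝ≥0∞ :=
  Mp X p f ^ (1 / p)

theorem Mp_le {f : Ω → ℝ} (d : Dec f) : Mp X p f ≤ ∑ i, X.N (d.F i) ^ p :=
  iInf_le _ d

theorem Mp_mono (hp : 0 < p) {f g : Ω → ℝ} (hf : Measurable f) (hg : Measurable g)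
    (hfg : ∀ x, |f x| ≤ |g x|) : Mp X p f ≤ Mp X p g := by
  refine le_iInf fun d => ?_
  have hsupp : ∀ x, f x ≠ 0 → g x ≠ 0 := by
    intro x hx hgx
    have := hfg x
    rw [hgx, abs_zero] at this
    exact hx (abs_eq_zero.1 (le_antisymm this (abs_nonneg _)))
  refine le_trans (Mp_le (d.transfer f hf hsupp)) (Finset.sum_le_sum fun i _ => ?_)
  refine ENNReal.rpow_le_rpow (X.mono _ _ (hf.indicator (d.measurableSet_S i)) (d.meas i) ?_)
    (le_of_lt ?_)
  · intro x
    show |(d.S i).indicator f x| ≤ |d.F i x|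
    rw [← d.indicator_S_eq i]
    by_cases h : x ∈ d.S i
    · rw [Set.indicator_of_mem h, Set.indicator_of_mem h]; exact hfg x
    · rw [Set.indicator_of_notMem h, Set.indicator_of_notMem h]
  · exact hp


theorem MM_le_X (hp : 0 < p) {f : Ω → ℝ} (hf : Measurable f) : MM X p f ≤ X.N f := by
  have h1 : Mp X p f ≤ X.N f ^ p := by
    refine le_trans (Mp_le (Dec.single hf)) ?_
    show (∑ _i : Fin 1, X.N f ^ p) ≤ X.N f ^ p
    simp
  calc MM X p f ≤ (X.N f ^ p) ^ (1 / p) :=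
        ENNReal.rpow_le_rpow h1 (by positivity)
    _ = X.N f := rpow_rpow_inv _ hp.ne'

theorem MM_mono (hp : 0 < p) {f g : Ω → ℝ} (hf : Measurable f) (hg : Measurable g)
    (hfg : ∀ x, |f x| ≤ |g x|) : MM X p f ≤ MM X p g :=
  ENNReal.rpow_le_rpow (Mp_mono hp hf hg hfg) (by positivity)

theorem X_le_MM (hp : 0 < p) (hXa : CrudeUpper X p a) {f : Ω → ℝ} (hf : Measurable f) :
    X.N f ≤ ENNReal.ofReal a * MM X p f := by
  haveI : Nonempty (Dec f) := ⟨Dec.single hf⟩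
  have h1 : ∀ d : Dec f, X.N f ≤ ENNReal.ofReal a * (∑ i, X.N (d.F i) ^ p) ^ (1 / p) := by
    intro d
    have h2 := hXa d.n d.F d.meas d.disj
    rwa [show (fun x => ∑ i, d.F i x) = f from funext d.sum] at h2
  calc X.N f ≤ ⨅ d : Dec f, ENNReal.ofReal a * (∑ i, X.N (d.F i) ^ p) ^ (1 / p) :=
        le_iInf h1
    _ = ENNReal.ofReal a * ⨅ d : Dec f, (∑ i, X.N (d.F i) ^ p) ^ (1 / p) :=
        (ENNReal.mul_iInf' (fun h => absurd h ENNReal.ofReal_ne_top)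
          (fun _ => inferInstance)).symm
    _ = ENNReal.ofReal a * MM X p f := by
        rw [MM, Mp, ← iInf_rpow _ (by positivity : (0:ℝ) < 1 / p)]

theorem Mp_add (hp : 0 < p) {u v : Ω → ℝ} (hu : Measurable u) (hv : Measurable v)
    (hdisj : Disj u v) :
    Mp X p (fun x => u x + v x) ≤ Mp X p u + Mp X p v := by
  haveI : Nonempty (Dec u) := ⟨Dec.single hu⟩
  haveI : Nonempty (Dec v) := ⟨Dec.single hv⟩
  have key : ∀ (d : Dec u) (e : Dec v), Mp X p (fun x => u x + v x) ≤
      (∑ i, X.N (d.F i) ^ p) + (∑ i, X.N (e.F i) ^ p) := by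
    intro d e
    refine le_trans (Mp_le (Dec.append hdisj d e)) (le_of_eq ?_)
    show ∑ i : Fin (d.n + e.n), X.N (Fin.addCases d.F e.F i) ^ p = _
    rw [Fin.sum_univ_add]
    simp
  calc Mp X p (fun x => u x + v x)
      ≤ ⨅ (d : Dec u) (e : Dec v), ((∑ i, X.N (d.F i) ^ p) + (∑ i, X.N (e.F i) ^ p)) :=
        le_iInf fun d => le_iInf fun e => key d e
    _ = Mp X p u + Mp X p v := by
        simp_rw [← ENNReal.add_iInf]
        rw [← ENNReal.iInf_add]
        rfl

theorem MM_pow (hp : 0 < p) (f : Ω → ℝ) : MM X p f ^ p = Mp X p f :=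
  rpow_inv_rpow _ hp.ne'

theorem MM_upper (hp : 0 < p) {u v : Ω → ℝ} (hu : Measurable u) (hv : Measurable v)
    (hdisj : Disj u v) :
    MM X p (fun x => u x + v x) ^ p ≤ MM X p u ^ p + MM X p v ^ p := by
  rw [MM_pow hp, MM_pow hp, MM_pow hp]
  exact Mp_add hp hu hv hdisj

theorem MM_smul (hp : 0 < p) : ∀ (c : ℝ) (f : Ω → ℝ), Measurable f →
    MM X p (fun x => c * f x) = ENNReal.ofReal |c| * MM X p f := by
  refine smul_of_le fun c f hf => ?_
  haveI : Nonempty (Dec f) := ⟨Dec.single hf⟩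
  have h1 : Mp X p (fun x => c * f x) ≤ ENNReal.ofReal |c| ^ p * Mp X p f := by
    have h2 : ∀ d : Dec f, Mp X p (fun x => c * f x) ≤
        ENNReal.ofReal |c| ^ p * ∑ i, X.N (d.F i) ^ p := by
      intro d
      refine le_trans (Mp_le (d.smulDec c)) (le_of_eq ?_)
      show ∑ i, X.N (fun x => c * d.F i x) ^ p = _
      rw [Finset.mul_sum]
      refine Finset.sum_congr rfl fun i _ => ?_
      rw [X.smul c (d.F i) (d.meas i), ENNReal.mul_rpow_of_nonneg _ _ hp.le]
    calc Mp X p (fun x => c * f x)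
        ≤ ⨅ d : Dec f, ENNReal.ofReal |c| ^ p * ∑ i, X.N (d.F i) ^ p := le_iInf h2
      _ = _ := (ENNReal.mul_iInf' (fun h => absurd h (by
            exact ENNReal.rpow_ne_top_of_nonneg hp.le ENNReal.ofReal_ne_top))
          (fun _ => inferInstance)).symm
  calc MM X p (fun x => c * f x)
      ≤ (ENNReal.ofReal |c| ^ p * Mp X p f) ^ (1 / p) :=
        ENNReal.rpow_le_rpow h1 (by positivity)
    _ = ENNReal.ofReal |c| * MM X p f := by
        rw [ENNReal.mul_rpow_of_nonneg _ _ (by positivity), rpow_rpow_inv _ hp.ne']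
        rfl

theorem good_MM (hp : 0 < p) (hXa : CrudeUpper X p a) : Good X p a (MM X p) where
  mono := fun f g hf hg h => MM_mono hp hf hg h
  smul := MM_smul hp
  upper := fun u v hu hv _ _ hd => MM_upper hp hu hv hd
  le_X := fun f hf => MM_le_X hp hf
  X_le := fun f hf => X_le_MM hp hXa hf


/-! ### Monotone approximating sequences and the regularizing operator `Freg` -/

theorem X_abs {f : Ω → ℝ} (hf : Measurable f) : X.N (fun x => |f x|) = X.N f :=
  le_antisymm (X.mono _ _ hf.abs hf (fun x => by simp))
    (X.mono _ _ hf hf.abs (fun x => by simp))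

/-- Monotone approximating sequences from below for `|f|`. -/
def ASeq (f : Ω → ℝ) : Type _ :=
  {h : ℕ → Ω → ℝ // (∀ k, Measurable (h k)) ∧ (∀ k x, 0 ≤ h k x) ∧
    (∀ k x, h k x ≤ h (k+1) x) ∧ (∀ x, Tendsto (fun k => h k x) atTop (𝓝 |f x|))}

def ASeq.const {f : Ω → ℝ} (hf : Measurable f) : ASeq f :=
  ⟨fun _ x => |f x|, fun _ => hf.abs, fun _ x => abs_nonneg _, fun _ x => le_rfl,
    fun _ => tendsto_const_nhds⟩

theorem ASeq.nonempty {f : Ω → ℝ} (hf : Measurable f) : Nonempty (ASeq f) :=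
  ⟨ASeq.const hf⟩

theorem ASeq.mono_k {f : Ω → ℝ} (s : ASeq f) (x : Ω) :
    Monotone fun k => s.1 k x :=
  monotone_nat_of_le_succ fun k => s.2.2.2.1 k x

theorem ASeq.le_abs {f : Ω → ℝ} (s : ASeq f) (k : ℕ) (x : Ω) : s.1 k x ≤ |f x| :=
  ge_of_tendsto (s.2.2.2.2 x) (Filter.eventually_atTop.2 ⟨k, fun m hm => s.mono_k x hm⟩)

/-- The regularizing operator. -/
noncomputable def Freg (N : (Ω → ℝ) → ℝ≥0∞) (f : Ω → ℝ) : ℝ≥0∞ :=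
  ⨅ s : ASeq f, ⨆ k, N (s.1 k)

theorem Freg_le {N : (Ω → ℝ) → ℝ≥0∞} {f : Ω → ℝ} (s : ASeq f) :
    Freg N f ≤ ⨆ k, N (s.1 k) :=
  iInf_le _ s

theorem Freg_op_mono {N N' : (Ω → ℝ) → ℝ≥0∞} (h : ∀ f, N f ≤ N' f) (f : Ω → ℝ) :
    Freg N f ≤ Freg N' f :=
  iInf_mono fun s => iSup_mono fun k => h _

theorem X_iSup_aseq {f : Ω → ℝ} (hf : Measurable f) (s : ASeq f) :
    (⨆ k, X.N (s.1 k)) = X.N f := by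
  have hm : Monotone fun k => X.N (s.1 k) := monotone_nat_of_le_succ fun k =>
    X.mono _ _ (s.2.1 k) (s.2.1 (k+1)) fun x => by
      rw [abs_of_nonneg (s.2.2.1 k x), abs_of_nonneg (s.2.2.1 (k+1) x)]
      exact s.2.2.2.1 k x
  have ht : Tendsto (fun k => X.N (s.1 k)) atTop (𝓝 (X.N (fun x => |f x|))) :=
    X.cont s.1 _ s.2.1 hf.abs s.2.2.1 s.2.2.2.1 s.2.2.2.2
  rw [tendsto_nhds_unique (tendsto_atTop_iSup hm) ht, X_abs hf]

/-- Monotone functionals are decreased by regularization. -/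
theorem Freg_le_self {N : (Ω → ℝ) → ℝ≥0∞}
    (hm : ∀ ⦃f g : Ω → ℝ⦄, Measurable f → Measurable g → (∀ x, |f x| ≤ |g x|) → N f ≤ N g)
    {f : Ω → ℝ} (hf : Measurable f) : Freg N f ≤ N f := by
  exact le_trans (Freg_le (ASeq.const hf)) (iSup_le fun k => le_of_eq (mono_abs hm hf))

theorem good_Freg (hp : 0 < p) {N : (Ω → ℝ) → ℝ≥0∞} (G : Good X p a N) :
    Good X p a (Freg N) where
  mono := by
    intro f g hf hg hfg
    refine le_iInf fun s => ?_
    -- build an approximating sequence for f by truncation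
    have hmeas : ∀ k, Measurable fun x => min (s.1 k x) |f x| :=
      fun k => (s.2.1 k).min hf.abs
    have hstep : ∀ k x, min (s.1 k x) |f x| ≤ min (s.1 (k+1) x) |f x| :=
      fun k x => min_le_min (s.2.2.2.1 k x) le_rfl
    have htend : ∀ x, Tendsto (fun k => min (s.1 k x) |f x|) atTop (𝓝 |f x|) := by
      intro x
      have := (s.2.2.2.2 x).min (tendsto_const_nhds (x := |f x|))
      rwa [min_eq_right (hfg x)] at this
    refine le_trans
      (Freg_le (⟨fun k x => min (s.1 k x) |f x|, hmeas,
        fun k x => le_min (s.2.2.1 k x) (abs_nonneg _), hstep, htend⟩ : ASeq f))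
      (iSup_mono fun k => ?_)
    show N (fun x => min (s.1 k x) |f x|) ≤ N (s.1 k)
    refine G.mono (hmeas k) (s.2.1 k) fun x => ?_
    rw [abs_of_nonneg (le_min (s.2.2.1 k x) (abs_nonneg _)),
      abs_of_nonneg (s.2.2.1 k x)]
    exact min_le_left _ _
  smul := by
    refine smul_of_le fun c f hf => ?_
    haveI := ASeq.nonempty hf
    have key : ∀ s : ASeq f, Freg N (fun x => c * f x) ≤
        ENNReal.ofReal |c| * ⨆ k, N (s.1 k) := by
      intro s
      have ht : ∀ x, Tendsto (fun k => |c| * s.1 k x) atTop (𝓝 |c * f x|) := by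
        intro x
        rw [abs_mul]
        exact (s.2.2.2.2 x).const_mul _
      refine le_trans (Freg_le (⟨fun k x => |c| * s.1 k x,
        fun k => (s.2.1 k).const_mul _,
        fun k x => mul_nonneg (abs_nonneg c) (s.2.2.1 k x),
        fun k x => mul_le_mul_of_nonneg_left (s.2.2.2.1 k x) (abs_nonneg c), ht⟩ :
          ASeq (fun x => c * f x))) (le_of_eq ?_)
      rw [ENNReal.mul_iSup]
      refine iSup_congr fun k => ?_
      show N (fun x => |c| * s.1 k x) = _
      rw [G.smul |c| (s.1 k) (s.2.1 k), abs_abs]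
    calc Freg N (fun x => c * f x)
        ≤ ⨅ s : ASeq f, ENNReal.ofReal |c| * ⨆ k, N (s.1 k) := le_iInf key
      _ = _ := (ENNReal.mul_iInf' (fun h => absurd h ENNReal.ofReal_ne_top)
          (fun _ => inferInstance)).symm
  upper := by
    intro u v hu hv hu0 hv0 hd
    haveI := ASeq.nonempty hu
    haveI := ASeq.nonempty hv
    have key : ∀ (s : ASeq u) (t : ASeq v), Freg N (fun x => u x + v x) ^ p ≤
        (⨆ k, N (s.1 k)) ^ p + (⨆ k, N (t.1 k)) ^ p := by
      intro s t
      have htend : ∀ x, Tendsto (fun k => s.1 k x + t.1 k x) atTop (𝓝 |u x + v x|) := by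
        intro x
        rw [abs_of_nonneg (add_nonneg (hu0 x) (hv0 x)), ← abs_of_nonneg (hu0 x),
          ← abs_of_nonneg (hv0 x)]
        exact (s.2.2.2.2 x).add (t.2.2.2.2 x)
      let st : ASeq (fun x => u x + v x) := ⟨fun k x => s.1 k x + t.1 k x,
        fun k => (s.2.1 k).add (t.2.1 k),
        fun k x => add_nonneg (s.2.2.1 k x) (t.2.2.1 k x),
        fun k x => add_le_add (s.2.2.2.1 k x) (t.2.2.2.1 k x), htend⟩
      have hdisj : ∀ k, Disj (s.1 k) (t.1 k) := by
        intro k x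
        rcases hd x with h | h
        · refine Or.inl (le_antisymm ?_ (s.2.2.1 k x))
          have := s.le_abs k x
          rwa [h, abs_zero] at this
        · refine Or.inr (le_antisymm ?_ (t.2.2.1 k x))
          have := t.le_abs k x
          rwa [h, abs_zero] at this
      calc Freg N (fun x => u x + v x) ^ p
          ≤ (⨆ k, N (st.1 k)) ^ p := ENNReal.rpow_le_rpow (Freg_le st) hp.le
        _ = ⨆ k, N (st.1 k) ^ p := iSup_rpow _ hp
        _ ≤ ⨆ k, (N (s.1 k) ^ p + N (t.1 k) ^ p) := by
            refine iSup_mono fun k => ?_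
            show N (fun x => s.1 k x + t.1 k x) ^ p ≤ _
            exact G.upper (s.2.1 k) (t.2.1 k) (s.2.2.1 k) (t.2.2.1 k) (hdisj k)
        _ ≤ (⨆ k, N (s.1 k) ^ p) + ⨆ k, N (t.1 k) ^ p :=
            iSup_le fun k => add_le_add (le_iSup (fun k => N (s.1 k) ^ p) k)
              (le_iSup (fun k => N (t.1 k) ^ p) k)
        _ = (⨆ k, N (s.1 k)) ^ p + (⨆ k, N (t.1 k)) ^ p := by
            rw [iSup_rpow _ hp, iSup_rpow _ hp]
    calc Freg N (fun x => u x + v x) ^ p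
        ≤ ⨅ (s : ASeq u) (t : ASeq v), ((⨆ k, N (s.1 k)) ^ p + (⨆ k, N (t.1 k)) ^ p) :=
          le_iInf fun s => le_iInf fun t => key s t
      _ = (⨅ s : ASeq u, (⨆ k, N (s.1 k)) ^ p) + ⨅ t : ASeq v, (⨆ k, N (t.1 k)) ^ p := by
          simp_rw [← ENNReal.add_iInf]
          rw [← ENNReal.iInf_add]
      _ = Freg N u ^ p + Freg N v ^ p := by
          rw [Freg, Freg, iInf_rpow _ hp, iInf_rpow _ hp]
  le_X := by
    intro f hf
    refine le_trans (Freg_le_self (fun g h hg hh hgh => G.mono hg hh hgh) hf) (G.le_X hf)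
  X_le := by
    intro f hf
    haveI := ASeq.nonempty hf
    have key : ∀ s : ASeq f, X.N f ≤ ENNReal.ofReal a * ⨆ k, N (s.1 k) := by
      intro s
      rw [← X_iSup_aseq hf s, ENNReal.mul_iSup]
      exact iSup_mono fun k => G.X_le (s.2.1 k)
    calc X.N f ≤ ⨅ s : ASeq f, ENNReal.ofReal a * ⨆ k, N (s.1 k) := le_iInf key
      _ = _ := (ENNReal.mul_iInf' (fun h => absurd h ENNReal.ofReal_ne_top)
          (fun _ => inferInstance)).symm


/-! ### The transfinite chain of regularizations -/

noncomputable def NN (X : AdmissibleQuasinorm Ω) (p : ℝ) : Ordinal.{0} → (Ω → ℝ) → ℝ≥0∞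
  | α => fun f => MM X p f ⊓ ⨅ β : {β : Ordinal // β < α}, Freg (NN X p β.1) f
  termination_by α => α
  decreasing_by exact β.2

theorem NN_def (X : AdmissibleQuasinorm Ω) (p : ℝ) (α : Ordinal) :
    NN X p α = fun f => MM X p f ⊓ ⨅ β : {β : Ordinal // β < α}, Freg (NN X p β.1) f := by
  rw [NN]

theorem NN_le_MM {α : Ordinal} (f : Ω → ℝ) : NN X p α f ≤ MM X p f := by
  rw [NN_def]; exact inf_le_left

theorem NN_le_F {α β : Ordinal} (hβ : β < α) (f : Ω → ℝ) :
    NN X p α f ≤ Freg (NN X p β) f := by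
  rw [NN_def]
  exact le_trans inf_le_right (iInf_le (fun β : {β : Ordinal // β < α} => Freg (NN X p β.1) f) ⟨β, hβ⟩)

theorem NN_anti {α β : Ordinal} (hβα : β ≤ α) (f : Ω → ℝ) :
    NN X p α f ≤ NN X p β f := by
  conv_rhs => rw [NN_def]
  refine le_inf (NN_le_MM f) (le_iInf fun γ => ?_)
  exact NN_le_F (lt_of_lt_of_le γ.2 hβα) f

theorem good_NN (hp : 0 < p) (hXa : CrudeUpper X p a) (α : Ordinal) :
    Good X p a (NN X p α) := by
  induction α using Ordinal.induction with
  | _ α IH =>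
  set T : Option {β : Ordinal // β < α} → (Ω → ℝ) → ℝ≥0∞ :=
    fun o => o.elim (MM X p) (fun β => Freg (NN X p β.1)) with hT
  have hNN : ∀ f, NN X p α f = ⨅ o, T o f := by
    intro f
    rw [NN_def, iInf_option (fun o => T o f)]
    rfl
  have goodT : ∀ o, Good X p a (T o) := by
    rintro (_ | β)
    · exact good_MM hp hXa
    · exact good_Freg hp (IH β.1 β.2)
  have chainT : ∀ o₁ o₂, ∃ o₃, ∀ f, Measurable f → T o₃ f ≤ T o₁ f ∧ T o₃ f ≤ T o₂ f := by
    have hFM : ∀ (β : {β : Ordinal // β < α}) (f : Ω → ℝ), Measurable f →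
        Freg (NN X p β.1) f ≤ MM X p f := by
      intro β f hf
      exact le_trans (Freg_le_self (fun u v hu hv huv => (IH β.1 β.2).mono hu hv huv) hf)
        (NN_le_MM f)
    rintro (_ | β₁) (_ | β₂)
    · exact ⟨none, fun f _ => ⟨le_rfl, le_rfl⟩⟩
    · exact ⟨some β₂, fun f hf => ⟨hFM β₂ f hf, le_rfl⟩⟩
    · exact ⟨some β₁, fun f hf => ⟨le_rfl, hFM β₁ f hf⟩⟩
    · rcases le_total β₁.1 β₂.1 with h | h
      · exact ⟨some β₂, fun f _ => ⟨Freg_op_mono (NN_anti h) f, le_rfl⟩⟩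
      · exact ⟨some β₁, fun f _ => ⟨le_rfl, Freg_op_mono (NN_anti h) f⟩⟩
  constructor
  · intro f g hf hg hfg
    rw [hNN f, hNN g]
    exact iInf_mono fun o => (goodT o).mono hf hg hfg
  · intro c f hf
    rw [hNN, hNN]
    calc (⨅ o, T o (fun x => c * f x))
        = ⨅ o, ENNReal.ofReal |c| * T o f := iInf_congr fun o => (goodT o).smul c f hf
      _ = ENNReal.ofReal |c| * ⨅ o, T o f :=
          (ENNReal.mul_iInf' (fun h => absurd h ENNReal.ofReal_ne_top)
            (fun _ => inferInstance)).symm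
  · intro u v hu hv hu0 hv0 hd
    rw [hNN, hNN, hNN]
    calc (⨅ o, T o (fun x => u x + v x)) ^ p
        = ⨅ o, T o (fun x => u x + v x) ^ p := iInf_rpow _ hp
      _ ≤ ⨅ o, (T o u ^ p + T o v ^ p) :=
          iInf_mono fun o => (goodT o).upper hu hv hu0 hv0 hd
      _ = (⨅ o, T o u ^ p) + ⨅ o, T o v ^ p := by
          refine (ENNReal.iInf_add_iInf fun i j => ?_).symm
          obtain ⟨k, hk⟩ := chainT i j
          exact ⟨k, add_le_add (ENNReal.rpow_le_rpow ((hk u hu).1) hp.le)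
            (ENNReal.rpow_le_rpow ((hk v hv).2) hp.le)⟩
      _ = (⨅ o, T o u) ^ p + (⨅ o, T o v) ^ p := by
          rw [iInf_rpow _ hp, iInf_rpow _ hp]
  · intro f hf
    exact le_trans (NN_le_MM f) (MM_le_X hp hf)
  · intro f hf
    rw [hNN]
    calc X.N f ≤ ⨅ o, ENNReal.ofReal a * T o f := le_iInf fun o => (goodT o).X_le hf
      _ = _ := (ENNReal.mul_iInf' (fun h => absurd h ENNReal.ofReal_ne_top)
          (fun _ => inferInstance)).symm


/-! ### The stabilized functional `Www` -/

/-- The first uncountable ordinal. -/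
noncomputable def Theta : Ordinal.{0} := (Cardinal.aleph 1).ord

theorem Theta_pos : 0 < Theta := Cardinal.isRegular_aleph_one.ord_pos

theorem Theta_isLimit : Order.IsSuccLimit Theta := Cardinal.isSuccLimit_ord (Cardinal.aleph0_le_aleph 1)

theorem iSup_lt_Theta (A : ℕ → Ordinal) (hA : ∀ n, A n < Theta) : (⨆ n, A n) < Theta := by
  refine Ordinal.iSup_lt_ord ?_ hA
  rw [show Theta.cof = Cardinal.aleph 1 from Cardinal.isRegular_aleph_one.cof_eq,
    Cardinal.mk_nat]
  exact Cardinal.aleph0_lt_aleph_one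

/-- The exact upper `p`-estimate functional, regularized to be continuous from below. -/
noncomputable def Www (X : AdmissibleQuasinorm Ω) (p : ℝ) (f : Ω → ℝ) : ℝ≥0∞ :=
  ⨅ α : {α : Ordinal // α < Theta}, NN X p α.1 f

instance : Nonempty {α : Ordinal // α < Theta} := ⟨⟨0, Theta_pos⟩⟩

theorem good_Www (hp : 0 < p) (hXa : CrudeUpper X p a) : Good X p a (Www X p) := by
  constructor
  · intro f g hf hg hfg
    exact iInf_mono fun α => (good_NN hp hXa α.1).mono hf hg hfg
  · intro c f hf
    calc (⨅ α : {α : Ordinal // α < Theta}, NN X p α.1 (fun x => c * f x))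
        = ⨅ α : {α : Ordinal // α < Theta}, ENNReal.ofReal |c| * NN X p α.1 f :=
          iInf_congr fun α => (good_NN hp hXa α.1).smul c f hf
      _ = _ := (ENNReal.mul_iInf' (fun h => absurd h ENNReal.ofReal_ne_top)
          (fun _ => inferInstance)).symm
  · intro u v hu hv hu0 hv0 hd
    calc Www X p (fun x => u x + v x) ^ p
        = ⨅ α : {α : Ordinal // α < Theta}, NN X p α.1 (fun x => u x + v x) ^ p :=
          iInf_rpow _ hp
      _ ≤ ⨅ α : {α : Ordinal // α < Theta}, (NN X p α.1 u ^ p + NN X p α.1 v ^ p) :=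
          iInf_mono fun α => (good_NN hp hXa α.1).upper hu hv hu0 hv0 hd
      _ = (⨅ α : {α : Ordinal // α < Theta}, NN X p α.1 u ^ p) +
            ⨅ α : {α : Ordinal // α < Theta}, NN X p α.1 v ^ p := by
          refine (ENNReal.iInf_add_iInf fun i j => ?_).symm
          rcases le_total i.1 j.1 with h | h
          · exact ⟨j, add_le_add (ENNReal.rpow_le_rpow (NN_anti h u) hp.le) le_rfl⟩
          · exact ⟨i, add_le_add le_rfl (ENNReal.rpow_le_rpow (NN_anti h v) hp.le)⟩
      _ = Www X p u ^ p + Www X p v ^ p := by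
          rw [Www, Www, iInf_rpow _ hp, iInf_rpow _ hp]
  · intro f hf
    exact le_trans (iInf_le _ ⟨0, Theta_pos⟩) ((good_NN hp hXa 0).le_X hf)
  · intro f hf
    calc X.N f ≤ ⨅ α : {α : Ordinal // α < Theta}, ENNReal.ofReal a * NN X p α.1 f :=
          le_iInf fun α => (good_NN hp hXa α.1).X_le hf
      _ = _ := (ENNReal.mul_iInf' (fun h => absurd h ENNReal.ofReal_ne_top)
          (fun _ => inferInstance)).symm

/-- The crucial continuity from below of `Www`. -/
theorem Www_iSup (hp : 0 < p) (hXa : CrudeUpper X p a) {f : ℕ → Ω → ℝ} {g : Ω → ℝ}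
    (hfm : ∀ n, Measurable (f n)) (hg : Measurable g)
    (h0 : ∀ n x, 0 ≤ f n x) (hstep : ∀ n x, f n x ≤ f (n + 1) x)
    (htend : ∀ x, Tendsto (fun n => f n x) atTop (𝓝 (g x))) :
    (⨆ n, Www X p (f n)) = Www X p g := by
  have hg0 : ∀ x, 0 ≤ g x := fun x =>
    ge_of_tendsto (htend x) (Filter.Eventually.of_forall fun n => h0 n x)
  have hfg : ∀ n x, f n x ≤ g x := by
    intro n x
    refine ge_of_tendsto (htend x) (Filter.eventually_atTop.2 ⟨n, fun m hm => ?_⟩)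
    exact (monotone_nat_of_le_succ (fun k => hstep k x)) hm
  have habs : ∀ x, Tendsto (fun n => f n x) atTop (𝓝 |g x|) := by
    intro x
    rw [abs_of_nonneg (hg0 x)]
    exact htend x
  set L := ⨆ n, Www X p (f n) with hL
  have hle : L ≤ Www X p g := by
    refine iSup_le fun n => (good_Www hp hXa).mono (hfm n) hg fun x => ?_
    rw [abs_of_nonneg (h0 n x), abs_of_nonneg (hg0 x)]
    exact hfg n x
  refine le_antisymm hle ?_
  refine ENNReal.le_of_forall_pos_le_add fun ε hε hLtop => ?_
  have hch : ∀ n, ∃ α : {α : Ordinal // α < Theta}, NN X p α.1 (f n) < Www X p (f n) + ε := by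
    intro n
    refine iInf_lt_iff.1 ?_
    refine ENNReal.lt_add_right ?_ (by exact_mod_cast hε.ne')
    exact ne_top_of_le_ne_top hLtop.ne (le_iSup (fun n => Www X p (f n)) n)
  choose A hA using hch
  set β : Ordinal := ⨆ n, (A n).1 with hβdef
  have hβ : β < Theta := iSup_lt_Theta _ fun n => (A n).2
  have hβ1 : β + 1 < Theta := by
    rw [Ordinal.add_one_eq_succ]
    exact Theta_isLimit.succ_lt hβ
  calc Www X p g ≤ NN X p (β + 1) g := iInf_le (fun α : {α : Ordinal // α < Theta} => NN X p α.1 g) ⟨β + 1, hβ1⟩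
    _ ≤ Freg (NN X p β) g := by
        refine NN_le_F ?_ g
        rw [Ordinal.add_one_eq_succ]
        exact Order.lt_succ β
    _ ≤ ⨆ n, NN X p β (f n) := Freg_le (⟨f, hfm, h0, hstep, habs⟩ : ASeq g)
    _ ≤ ⨆ n, (Www X p (f n) + ε) := by
        refine iSup_mono fun n => ?_
        exact le_trans (NN_anti (Ordinal.le_iSup (fun n => (A n).1) n) (f n)) (hA n).le
    _ ≤ L + ε := iSup_le fun n => add_le_add (le_iSup (fun n => Www X p (f n)) n) le_rfl


/-! ### The supremum functional `Y0` -/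

def Dec.congr {f g : Ω → ℝ} (d : Dec f) (h : ∀ x, f x = g x) : Dec g :=
  ⟨d.n, d.F, d.meas, d.disj, fun x => (d.sum x).trans (h x)⟩

/-- Restriction of a decomposition of `w` to a measurable set on which `w` coincides
with `u` (and off which `u` vanishes). -/
noncomputable def Dec.restrict {w : Ω → ℝ} (d : Dec w) {A : Set Ω} (hA : MeasurableSet A)
    {u : Ω → ℝ} (h : ∀ x, A.indicator w x = u x) : Dec u where
  n := d.n
  F := fun i => A.indicator (d.F i)
  meas := fun i => (d.meas i).indicator hA
  disj := fun i j hij x => by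
    rcases d.disj i j hij x with h1 | h1
    · exact Or.inl (by simp [Set.indicator_apply, h1])
    · exact Or.inr (by simp [Set.indicator_apply, h1])
  sum := fun x => by
    rw [← h x]
    by_cases hx : x ∈ A
    · simp only [Set.indicator_of_mem hx]
      exact d.sum x
    · simp only [Set.indicator_of_notMem hx]
      exact Finset.sum_const_zero

/-- Extension of a decomposition of `f` to a decomposition of any measurable `g`,
using the first-index sets of `d` and one extra remainder piece. -/
noncomputable def Dec.extend {f : Ω → ℝ} (d : Dec f) (g : Ω → ℝ) (hg : Measurable g) :
    Dec g where
  n := d.n + 1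
  F := Fin.addCases (fun i => (d.S i).indicator g)
        (fun _ => ((⋃ i, d.S i)ᶜ : Set Ω).indicator g)
  meas := fun i => by
    induction i using Fin.addCases with
    | left i => simpa using hg.indicator (d.measurableSet_S i)
    | right i =>
      simpa using hg.indicator (MeasurableSet.compl (MeasurableSet.iUnion d.measurableSet_S))
  disj := by
    intro i j hij x
    induction i using Fin.addCases with
    | left i' =>
      induction j using Fin.addCases with
      | left j' =>
        simp only [Fin.addCases_left]
        have hij' : i' ≠ j' := fun h => hij (congrArg _ h)
        by_cases h : x ∈ d.S i'
        · exact Or.inr (Set.indicator_of_notMem (d.S_disjoint hij' h) g)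
        · exact Or.inl (Set.indicator_of_notMem h g)
      | right j' =>
        simp only [Fin.addCases_left, Fin.addCases_right]
        by_cases h : x ∈ d.S i'
        · refine Or.inr (Set.indicator_of_notMem (fun hc => ?_) g)
          exact hc (Set.mem_iUnion.2 ⟨i', h⟩)
        · exact Or.inl (Set.indicator_of_notMem h g)
    | right i' =>
      induction j using Fin.addCases with
      | left j' =>
        simp only [Fin.addCases_left, Fin.addCases_right]
        by_cases h : x ∈ d.S j'
        · refine Or.inl (Set.indicator_of_notMem (fun hc => ?_) g)
          exact hc (Set.mem_iUnion.2 ⟨j', h⟩)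
        · exact Or.inr (Set.indicator_of_notMem h g)
      | right j' =>
        exact absurd (by omega : i' = j') fun h => hij (congrArg _ h)
  sum := fun x => by
    rw [Fin.sum_univ_add]
    simp only [Fin.addCases_left, Fin.addCases_right]
    rw [Fin.sum_univ_one]
    by_cases hx : x ∈ ⋃ i, d.S i
    · obtain ⟨i, hi⟩ := Set.mem_iUnion.1 hx
      rw [Set.indicator_of_notMem (Set.notMem_compl_iff.2 hx) g,
        Finset.sum_eq_single i
          (fun j _ hj => Set.indicator_of_notMem (d.S_disjoint hj.symm hi) g)
          (fun h => absurd (Finset.mem_univ i) h),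
        Set.indicator_of_mem hi, add_zero]
    · rw [Set.indicator_of_mem (Set.mem_compl hx) g]
      rw [Finset.sum_eq_zero fun i _ =>
        Set.indicator_of_notMem (fun hc => hx (Set.mem_iUnion.2 ⟨i, hc⟩)) g, zero_add]

section Y0sec

variable (X : AdmissibleQuasinorm Ω) (p q : ℝ)

noncomputable def Q0 (f : Ω → ℝ) : ℝ≥0∞ :=
  ⨆ d : Dec f, ∑ i, Www X p (d.F i) ^ q

noncomputable def Y0 (f : Ω → ℝ) : ℝ≥0∞ := Q0 X p q f ^ (1 / q)

end Y0sec

theorem le_Q0 {f : Ω → ℝ} (d : Dec f) : (∑ i, Www X p (d.F i) ^ q) ≤ Q0 X p q f :=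
  le_iSup (fun d : Dec f => ∑ i, Www X p (d.F i) ^ q) d

theorem Y0_pow (hq : 0 < q) (f : Ω → ℝ) : Y0 X p q f ^ q = Q0 X p q f :=
  rpow_inv_rpow _ hq.ne'

theorem Www_le_Y0 (hq : 0 < q) {f : Ω → ℝ} (hf : Measurable f) :
    Www X p f ≤ Y0 X p q f := by
  have h1 : Www X p f ^ q ≤ Q0 X p q f := by
    refine le_trans (le_of_eq ?_) (le_Q0 (Dec.single hf))
    show Www X p f ^ q = ∑ _i : Fin 1, Www X p f ^ q
    simp
  calc Www X p f = (Www X p f ^ q) ^ (1 / q) := (rpow_rpow_inv _ hq.ne').symm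
    _ ≤ Y0 X p q f := ENNReal.rpow_le_rpow h1 (by positivity)


theorem Q0_mono (hp : 0 < p) (hq : 0 < q) (hXa : CrudeUpper X p a) {f g : Ω → ℝ}
    (hf : Measurable f) (hg : Measurable g) (hfg : ∀ x, |f x| ≤ |g x|) :
    Q0 X p q f ≤ Q0 X p q g := by
  have G := good_Www hp hXa
  refine iSup_le fun d => ?_
  refine le_trans ?_ (le_Q0 (d.extend g hg))
  have key : ∀ i : Fin d.n, Www X p (d.F i) ^ q ≤ Www X p ((d.S i).indicator g) ^ q := by
    intro i
    refine ENNReal.rpow_le_rpow (G.mono (d.meas i) (hg.indicator (d.measurableSet_S i))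
      fun x => ?_) hq.le
    conv_lhs => rw [← d.indicator_S_eq i]
    by_cases h : x ∈ d.S i
    · rw [Set.indicator_of_mem h, Set.indicator_of_mem h]; exact hfg x
    · rw [Set.indicator_of_notMem h, Set.indicator_of_notMem h]
  calc ∑ i, Www X p (d.F i) ^ q
      ≤ ∑ i, Www X p ((d.S i).indicator g) ^ q := Finset.sum_le_sum fun i _ => key i
    _ ≤ _ := by
        show _ ≤ ∑ i : Fin (d.n + 1), Www X p ((d.extend g hg).F i) ^ q
        show _ ≤ ∑ i : Fin (d.n + 1), Www X p
          (Fin.addCases (fun i => (d.S i).indicator g)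
            (fun _ => ((⋃ i, d.S i)ᶜ : Set Ω).indicator g) i) ^ q
        rw [Fin.sum_univ_add]
        simp only [Fin.addCases_left, Fin.addCases_right]
        exact le_add_right le_rfl

theorem Y0_mono (hp : 0 < p) (hq : 0 < q) (hXa : CrudeUpper X p a) {f g : Ω → ℝ}
    (hf : Measurable f) (hg : Measurable g) (hfg : ∀ x, |f x| ≤ |g x|) :
    Y0 X p q f ≤ Y0 X p q g :=
  ENNReal.rpow_le_rpow (Q0_mono hp hq hXa hf hg hfg) (by positivity)

theorem Y0_le_bX (hp : 0 < p) (hq : 0 < q) (hXa : CrudeUpper X p a)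
    (hXb : CrudeLower X q b) {f : Ω → ℝ} (hf : Measurable f) :
    Y0 X p q f ≤ ENNReal.ofReal b * X.N f := by
  have G := good_Www hp hXa
  have hQ : Q0 X p q f ≤ (ENNReal.ofReal b * X.N f) ^ q := by
    refine iSup_le fun d => ?_
    have h1 : (∑ i, X.N (d.F i) ^ q) ^ (1 / q) ≤ ENNReal.ofReal b * X.N f := by
      have h2 := hXb d.n d.F d.meas d.disj
      rwa [show (fun x => ∑ i, d.F i x) = f from funext d.sum] at h2
    calc ∑ i, Www X p (d.F i) ^ q
        ≤ ∑ i, X.N (d.F i) ^ q :=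
          Finset.sum_le_sum fun i _ => ENNReal.rpow_le_rpow (G.le_X (d.meas i)) hq.le
      _ = ((∑ i, X.N (d.F i) ^ q) ^ (1 / q)) ^ q := (rpow_inv_rpow _ hq.ne').symm
      _ ≤ (ENNReal.ofReal b * X.N f) ^ q := ENNReal.rpow_le_rpow h1 hq.le
  calc Y0 X p q f ≤ ((ENNReal.ofReal b * X.N f) ^ q) ^ (1 / q) :=
        ENNReal.rpow_le_rpow hQ (by positivity)
    _ = ENNReal.ofReal b * X.N f := rpow_rpow_inv _ hq.ne'

theorem Q0_add {u v : Ω → ℝ} (hu : Measurable u) (hv : Measurable v) (hd : Disj u v) :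
    Q0 X p q u + Q0 X p q v ≤ Q0 X p q (fun x => u x + v x) := by
  haveI : Nonempty (Dec u) := ⟨Dec.single hu⟩
  haveI : Nonempty (Dec v) := ⟨Dec.single hv⟩
  refine ENNReal.iSup_add_iSup_le fun d e => ?_
  refine le_trans (le_of_eq ?_) (le_Q0 (Dec.append hd d e))
  show _ = ∑ i : Fin (d.n + e.n), Www X p (Fin.addCases d.F e.F i) ^ q
  rw [Fin.sum_univ_add]
  simp

theorem Y0_lower (hq : 0 < q) {u v : Ω → ℝ} (hu : Measurable u) (hv : Measurable v)
    (hd : Disj u v) :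
    Y0 X p q u ^ q + Y0 X p q v ^ q ≤ Y0 X p q (fun x => u x + v x) ^ q := by
  rw [Y0_pow hq, Y0_pow hq, Y0_pow hq]
  exact Q0_add hu hv hd

theorem Y0_upper (hp : 0 < p) (hq : 0 < q) (hpq : p < q) (hXa : CrudeUpper X p a)
    {u v : Ω → ℝ} (hu : Measurable u) (hv : Measurable v) (hd : Disj u v) :
    Y0 X p q (fun x => u x + v x) ^ p ≤ Y0 X p q u ^ p + Y0 X p q v ^ p := by
  have G := good_Www hp hXa
  set r := q / p with hrdef
  have hr : 1 ≤ r := (one_le_div hp).2 hpq.le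
  have hr0 : 0 < r := lt_of_lt_of_le zero_lt_one hr
  have hpr : p * r = q := by
    rw [hrdef, mul_comm, div_mul_cancel₀ _ hp.ne']
  have hinvr : 1 / r = p / q := by
    rw [hrdef, one_div_div]
  have hYQ : ∀ w : Ω → ℝ, Y0 X p q w ^ p = Q0 X p q w ^ (1 / r) := by
    intro w
    rw [Y0, ← ENNReal.rpow_mul, hinvr]
    congr 1
    rw [one_div, inv_mul_eq_div]
  have key : ∀ d : Dec (fun x => u x + v x),
      (∑ i, Www X p (d.F i) ^ q) ^ (1 / r) ≤ Y0 X p q u ^ p + Y0 X p q v ^ p := by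
    intro d
    have hA : MeasurableSet {x | v x = 0} := hv (measurableSet_singleton 0)
    have huA : ∀ x, ({x | v x = 0} : Set Ω).indicator (fun x => u x + v x) x = u x := by
      intro x
      by_cases h : x ∈ ({x | v x = 0} : Set Ω)
      · rw [Set.indicator_of_mem h]
        simp only [Set.mem_setOf_eq] at h
        rw [h, add_zero]
      · rw [Set.indicator_of_notMem h]
        simp only [Set.mem_setOf_eq] at h
        exact ((hd x).resolve_right h).symm
    have hvA : ∀ x, ({x | v x = 0}ᶜ : Set Ω).indicator (fun x => u x + v x) x = v x := by
      intro x
      by_cases h : x ∈ ({x | v x = 0}ᶜ : Set Ω)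
      · rw [Set.indicator_of_mem h]
        have h2 : u x = 0 := (hd x).resolve_right (by simpa using h)
        rw [h2, zero_add]
      · rw [Set.indicator_of_notMem h]
        exact (show v x = 0 by simpa using h).symm
    set du : Dec u := d.restrict hA huA with hdu
    set dv : Dec v := d.restrict hA.compl hvA with hdv
    have hpiece : ∀ i : Fin d.n, Www X p (d.F i) ^ p ≤
        Www X p (du.F i) ^ p + Www X p (dv.F i) ^ p := by
      intro i
      have hmu : Measurable fun x => |({x | v x = 0} : Set Ω).indicator (d.F i) x| :=
        ((d.meas i).indicator hA).abs
      have hmv : Measurable fun x => |({x | v x = 0}ᶜ : Set Ω).indicator (d.F i) x| :=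
        ((d.meas i).indicator hA.compl).abs
      have hdisj : Disj (fun x => |({x | v x = 0} : Set Ω).indicator (d.F i) x|)
          (fun x => |({x | v x = 0}ᶜ : Set Ω).indicator (d.F i) x|) := by
        intro x
        by_cases h : x ∈ ({x | v x = 0} : Set Ω)
        · refine Or.inr ?_
          show |({x | v x = 0}ᶜ : Set Ω).indicator (d.F i) x| = 0
          rw [Set.indicator_of_notMem (by simpa using h), abs_zero]
        · refine Or.inl ?_
          show |({x | v x = 0} : Set Ω).indicator (d.F i) x| = 0
          rw [Set.indicator_of_notMem h, abs_zero]
      have hup := G.upper hmu hmv (fun x => abs_nonneg _) (fun x => abs_nonneg _) hdisj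
      have heq : (fun x => |({x | v x = 0} : Set Ω).indicator (d.F i) x| +
          |({x | v x = 0}ᶜ : Set Ω).indicator (d.F i) x|) = fun x => |d.F i x| := by
        funext x
        by_cases h : x ∈ ({x | v x = 0} : Set Ω)
        · rw [Set.indicator_of_mem h, Set.indicator_of_notMem (by simpa using h), abs_zero,
            add_zero]
        · rw [Set.indicator_of_notMem h, Set.indicator_of_mem (by simpa using h), abs_zero,
            zero_add]
      rw [heq] at hup
      rw [G.abs (d.meas i)] at hup
      refine le_trans hup ?_
      rw [G.abs ((d.meas i).indicator hA), G.abs ((d.meas i).indicator hA.compl)]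
      exact le_rfl
    -- Minkowski step
    calc (∑ i, Www X p (d.F i) ^ q) ^ (1 / r)
        = (∑ i, (Www X p (d.F i) ^ p) ^ r) ^ (1 / r) := by
          rw [show (fun i : Fin d.n => Www X p (d.F i) ^ q)
            = fun i => (Www X p (d.F i) ^ p) ^ r from funext fun i => by
              rw [← ENNReal.rpow_mul, hpr]]
      _ ≤ (∑ i, (Www X p (du.F i) ^ p + Www X p (dv.F i) ^ p) ^ r) ^ (1 / r) :=
          ENNReal.rpow_le_rpow (Finset.sum_le_sum fun i _ =>
            ENNReal.rpow_le_rpow (hpiece i) hr0.le) (by positivity)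
      _ ≤ (∑ i, (Www X p (du.F i) ^ p) ^ r) ^ (1 / r) +
            (∑ i, (Www X p (dv.F i) ^ p) ^ r) ^ (1 / r) :=
          ENNReal.Lp_add_le _ _ _ hr
      _ ≤ Q0 X p q u ^ (1 / r) + Q0 X p q v ^ (1 / r) := by
          refine add_le_add (ENNReal.rpow_le_rpow ?_ (by positivity))
            (ENNReal.rpow_le_rpow ?_ (by positivity))
          · refine le_trans (le_of_eq ?_) (le_Q0 du)
            exact Finset.sum_congr rfl fun i _ => by rw [← ENNReal.rpow_mul, hpr]
          · refine le_trans (le_of_eq ?_) (le_Q0 dv)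
            exact Finset.sum_congr rfl fun i _ => by rw [← ENNReal.rpow_mul, hpr]
      _ = Y0 X p q u ^ p + Y0 X p q v ^ p := by rw [hYQ u, hYQ v]
  calc Y0 X p q (fun x => u x + v x) ^ p
      = Q0 X p q (fun x => u x + v x) ^ (1 / r) := hYQ _
    _ = ⨆ d : Dec (fun x => u x + v x), (∑ i, Www X p (d.F i) ^ q) ^ (1 / r) := by
        rw [Q0, iSup_rpow _ (by positivity)]
    _ ≤ Y0 X p q u ^ p + Y0 X p q v ^ p := iSup_le key


theorem Good.zero {V : (Ω → ℝ) → ℝ≥0∞} (G : Good X p a V) : V (fun _ => 0) = 0 := by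
  have h := G.smul 0 (fun _ => 0) measurable_const
  simpa using h

theorem Y0_smul (hp : 0 < p) (hq : 0 < q) (hXa : CrudeUpper X p a) :
    ∀ (c : ℝ) (f : Ω → ℝ), Measurable f →
      Y0 X p q (fun x => c * f x) = ENNReal.ofReal |c| * Y0 X p q f := by
  have G := good_Www hp hXa
  refine smul_of_le fun c f hf => ?_
  have hQ : Q0 X p q (fun x => c * f x) ≤ ENNReal.ofReal |c| ^ q * Q0 X p q f := by
    rcases eq_or_ne c 0 with rfl | hc
    · refine iSup_le fun e => ?_
      have hz : ∀ i, e.F i = fun _ => (0:ℝ) := by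
        intro i
        funext x
        by_contra h
        exact (e.piece_support h) (by simp)
      rw [Finset.sum_eq_zero fun i _ => by
        rw [hz i, G.zero, ENNReal.zero_rpow_of_pos hq]]
      exact zero_le
    · refine iSup_le fun e => ?_
      set d : Dec f := (e.smulDec c⁻¹).congr
        (fun x => by rw [← mul_assoc, inv_mul_cancel₀ hc, one_mul]) with hd
      have hval : ∀ i : Fin e.n, Www X p (e.F i)
          = ENNReal.ofReal |c| * Www X p (d.F i) := by
        intro i
        have he : e.F i = fun x => c * d.F i x := by
          funext x
          show e.F i x = c * (c⁻¹ * e.F i x)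
          rw [← mul_assoc, mul_inv_cancel₀ hc, one_mul]
        rw [he, G.smul c (d.F i) (d.meas i)]
      calc ∑ i, Www X p (e.F i) ^ q
          = ENNReal.ofReal |c| ^ q * ∑ i, Www X p (d.F i) ^ q := by
            rw [Finset.mul_sum]
            exact Finset.sum_congr rfl fun i _ => by
              rw [hval i, ENNReal.mul_rpow_of_nonneg _ _ hq.le]
        _ ≤ _ := mul_le_mul_right (le_Q0 d) _
  calc Y0 X p q (fun x => c * f x)
      ≤ (ENNReal.ofReal |c| ^ q * Q0 X p q f) ^ (1 / q) :=
        ENNReal.rpow_le_rpow hQ (by positivity)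
    _ = ENNReal.ofReal |c| * Y0 X p q f := by
        rw [ENNReal.mul_rpow_of_nonneg _ _ (by positivity), rpow_rpow_inv _ hq.ne']
        rfl

theorem Y0_iSup (hp : 0 < p) (hq : 0 < q) (hXa : CrudeUpper X p a)
    {f : ℕ → Ω → ℝ} {g : Ω → ℝ}
    (hfm : ∀ n, Measurable (f n)) (hg : Measurable g)
    (h0 : ∀ n x, 0 ≤ f n x) (hstep : ∀ n x, f n x ≤ f (n + 1) x)
    (htend : ∀ x, Tendsto (fun n => f n x) atTop (𝓝 (g x))) :
    (⨆ n, Y0 X p q (f n)) = Y0 X p q g := by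
  have G := good_Www hp hXa
  have hg0 : ∀ x, 0 ≤ g x := fun x =>
    ge_of_tendsto (htend x) (Filter.Eventually.of_forall fun n => h0 n x)
  have hmono : ∀ x, Monotone fun n => f n x := fun x =>
    monotone_nat_of_le_succ fun k => hstep k x
  have hfg : ∀ n x, f n x ≤ g x := fun n x =>
    ge_of_tendsto (htend x) (Filter.eventually_atTop.2 ⟨n, fun m hm => hmono x hm⟩)
  have hsupp : ∀ n x, f n x ≠ 0 → g x ≠ 0 := by
    intro n x hx h2
    exact hx (le_antisymm (h2 ▸ hfg n x) (h0 n x))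
  have hQ : (⨆ n, Q0 X p q (f n)) = Q0 X p q g := by
    refine le_antisymm (iSup_le fun n => Q0_mono hp hq hXa (hfm n) hg fun x => ?_) ?_
    · rw [abs_of_nonneg (h0 n x), abs_of_nonneg (hg0 x)]
      exact hfg n x
    refine iSup_le fun d => ?_
    have hpiece : ∀ i : Fin d.n,
        (⨆ n, Www X p ((d.S i).indicator (f n))) = Www X p (d.F i) := by
      intro i
      refine Www_iSup hp hXa (fun n => (hfm n).indicator (d.measurableSet_S i)) (d.meas i)
        (fun n x => Set.indicator_nonneg (fun y _ => h0 n y) x)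
        (fun n x => ?_) (fun x => ?_)
      · by_cases h : x ∈ d.S i
        · rw [Set.indicator_of_mem h, Set.indicator_of_mem h]
          exact hstep n x
        · rw [Set.indicator_of_notMem h, Set.indicator_of_notMem h]
      · by_cases h : x ∈ d.S i
        · have h2 : d.F i x = g x := by
            rw [← d.indicator_S_eq i, Set.indicator_of_mem h]
          simp only [Set.indicator_of_mem h]
          rw [h2]
          exact htend x
        · have h2 : d.F i x = 0 := by
            rw [← d.indicator_S_eq i, Set.indicator_of_notMem h]
          simp only [Set.indicator_of_notMem h]
          rw [h2]
          exact tendsto_const_nhds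
    calc ∑ i, Www X p (d.F i) ^ q
        = ∑ i, ⨆ n, Www X p ((d.S i).indicator (f n)) ^ q := by
          refine Finset.sum_congr rfl fun i _ => ?_
          rw [← hpiece i, iSup_rpow _ hq]
      _ = ⨆ n, ∑ i, Www X p ((d.S i).indicator (f n)) ^ q := by
          refine ENNReal.finsetSum_iSup_of_monotone fun i => ?_
          intro m n hmn
          refine ENNReal.rpow_le_rpow (G.mono ((hfm m).indicator (d.measurableSet_S i))
            ((hfm n).indicator (d.measurableSet_S i)) fun x => ?_) hq.le
          by_cases h : x ∈ d.S i
          · rw [Set.indicator_of_mem h, Set.indicator_of_mem h,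
              abs_of_nonneg (h0 m x), abs_of_nonneg (h0 n x)]
            exact hmono x hmn
          · rw [Set.indicator_of_notMem h, Set.indicator_of_notMem h]
      _ ≤ ⨆ n, Q0 X p q (f n) := by
          refine iSup_mono fun n => ?_
          exact le_Q0 (d.transfer (f n) (hfm n) (hsupp n))
  calc (⨆ n, Y0 X p q (f n)) = (⨆ n, Q0 X p q (f n)) ^ (1 / q) := by
        rw [iSup_rpow _ (by positivity : (0:ℝ) < 1 / q)]
        rfl
    _ = Y0 X p q g := by rw [hQ]; rfl


/-! ### Finitely many pieces -/

theorem Y0_zero (hp : 0 < p) (hq : 0 < q) (hXa : CrudeUpper X p a) :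
    Y0 X p q (fun _ => (0:ℝ)) = 0 := by
  have hQ : Q0 X p q (fun _ => (0:ℝ)) = 0 := by
    refine le_antisymm (iSup_le fun e => le_of_eq (Finset.sum_eq_zero fun i _ => ?_))
      zero_le
    have hz : e.F i = fun _ => (0:ℝ) := funext fun x => by
      by_contra h
      exact (e.piece_support h) rfl
    rw [hz, (good_Www hp hXa).zero, ENNReal.zero_rpow_of_pos hq]
  rw [Y0, hQ, ENNReal.zero_rpow_of_pos (by positivity)]

theorem Y0_abs (hp : 0 < p) (hq : 0 < q) (hXa : CrudeUpper X p a) {f : Ω → ℝ}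
    (hf : Measurable f) : Y0 X p q (fun x => |f x|) = Y0 X p q f :=
  mono_abs (fun u v hu hv huv => Y0_mono hp hq hXa hu hv huv) hf

theorem abs_sum_disj {n : ℕ} {fs : Fin n → Ω → ℝ} (hd : DisjSupp fs) (x : Ω) :
    |∑ i, fs i x| = ∑ i, |fs i x| := by
  classical
  by_cases h : ∃ i, fs i x ≠ 0
  · obtain ⟨i0, hi0⟩ := h
    rw [Finset.sum_eq_single i0 (fun j _ hj => (hd j i0 hj x).resolve_right hi0)
        (fun h => absurd (Finset.mem_univ i0) h),
      Finset.sum_eq_single i0 (fun j _ hj => by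
        rw [(hd j i0 hj x).resolve_right hi0, abs_zero])
        (fun h => absurd (Finset.mem_univ i0) h)]
  · push_neg at h
    rw [Finset.sum_eq_zero fun i _ => h i, Finset.sum_eq_zero fun i _ => by
      rw [h i, abs_zero], abs_zero]

theorem Y0_nary_upper_nonneg (hp : 0 < p) (hq : 0 < q) (hpq : p < q)
    (hXa : CrudeUpper X p a) :
    ∀ (n : ℕ) (fs : Fin n → Ω → ℝ), (∀ i, Measurable (fs i)) → (∀ i x, 0 ≤ fs i x) →
      DisjSupp fs → Y0 X p q (fun x => ∑ i, fs i x) ^ p ≤ ∑ i, Y0 X p q (fs i) ^ p := by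
  intro n
  induction n with
  | zero =>
    intro fs _ _ _
    have h0 : (fun x => ∑ i : Fin 0, fs i x) = fun _ => (0:ℝ) := funext fun x => by simp
    rw [h0, Y0_zero hp hq hXa, ENNReal.zero_rpow_of_pos hp]
    exact zero_le
  | succ n IH =>
    intro fs hm h0 hd
    have hsum : (fun x => ∑ i : Fin (n+1), fs i x)
        = fun x => fs 0 x + ∑ i : Fin n, fs i.succ x := funext fun x => by
      rw [Fin.sum_univ_succ]
    have hmt : Measurable fun x => ∑ i : Fin n, fs i.succ x :=
      Finset.measurable_sum _ fun i _ => hm i.succ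
    have hdt : DisjSupp fun i : Fin n => fs i.succ := fun i j hij x =>
      hd i.succ j.succ (fun h => hij (Fin.succ_injective n h)) x
    have hdisj : Disj (fs 0) (fun x => ∑ i : Fin n, fs i.succ x) := by
      intro x
      by_cases h : fs 0 x = 0
      · exact Or.inl h
      · refine Or.inr (Finset.sum_eq_zero fun i _ => ?_)
        exact (hd i.succ 0 (Fin.succ_ne_zero i) x).resolve_right h
    rw [hsum]
    calc Y0 X p q (fun x => fs 0 x + ∑ i : Fin n, fs i.succ x) ^ p
        ≤ Y0 X p q (fs 0) ^ p + Y0 X p q (fun x => ∑ i : Fin n, fs i.succ x) ^ p :=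
          Y0_upper hp hq hpq hXa (hm 0) hmt hdisj
      _ ≤ Y0 X p q (fs 0) ^ p + ∑ i : Fin n, Y0 X p q (fs i.succ) ^ p :=
          add_le_add le_rfl (IH _ (fun i => hm i.succ) (fun i x => h0 i.succ x) hdt)
      _ = ∑ i : Fin (n+1), Y0 X p q (fs i) ^ p :=
          (Fin.sum_univ_succ fun i => Y0 X p q (fs i) ^ p).symm

theorem Y0_nary_upper (hp : 0 < p) (hq : 0 < q) (hpq : p < q) (hXa : CrudeUpper X p a)
    {n : ℕ} {fs : Fin n → Ω → ℝ} (hm : ∀ i, Measurable (fs i)) (hd : DisjSupp fs) :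
    Y0 X p q (fun x => ∑ i, fs i x) ^ p ≤ ∑ i, Y0 X p q (fs i) ^ p := by
  have hmt : Measurable fun x => ∑ i, fs i x := Finset.measurable_sum _ fun i _ => hm i
  have habs : Y0 X p q (fun x => ∑ i, fs i x)
      = Y0 X p q (fun x => ∑ i, |fs i x|) := by
    refine le_antisymm (Y0_mono hp hq hXa hmt (Finset.measurable_sum _ fun i _ => (hm i).abs)
      fun x => ?_) (Y0_mono hp hq hXa (Finset.measurable_sum _ fun i _ => (hm i).abs) hmt
      fun x => ?_)
    · rw [abs_sum_disj hd x]
      exact le_abs_self _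
    · rw [abs_of_nonneg (Finset.sum_nonneg fun i (_ : i ∈ Finset.univ) => abs_nonneg (fs i x)),
        abs_sum_disj hd x]
  rw [habs]
  have hda : DisjSupp fun i => fun x => |fs i x| := fun i j hij x => by
    rcases hd i j hij x with h | h
    · exact Or.inl (by simp [h])
    · exact Or.inr (by simp [h])
  calc Y0 X p q (fun x => ∑ i, |fs i x|) ^ p
      ≤ ∑ i, Y0 X p q (fun x => |fs i x|) ^ p :=
        Y0_nary_upper_nonneg hp hq hpq hXa n _ (fun i => (hm i).abs)
          (fun i x => abs_nonneg _) hda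
    _ = ∑ i, Y0 X p q (fs i) ^ p := Finset.sum_congr rfl fun i _ => by
        rw [Y0_abs hp hq hXa (hm i)]

theorem Y0_nary_lower (hp : 0 < p) (hq : 0 < q) (hXa : CrudeUpper X p a) :
    ∀ (n : ℕ) (fs : Fin n → Ω → ℝ), (∀ i, Measurable (fs i)) → DisjSupp fs →
      (∑ i, Y0 X p q (fs i) ^ q) ≤ Y0 X p q (fun x => ∑ i, fs i x) ^ q := by
  intro n
  induction n with
  | zero =>
    intro fs _ _
    simp
  | succ n IH =>
    intro fs hm hd
    have hsum : (fun x => ∑ i : Fin (n+1), fs i x)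
        = fun x => fs 0 x + ∑ i : Fin n, fs i.succ x := funext fun x => by
      rw [Fin.sum_univ_succ]
    have hmt : Measurable fun x => ∑ i : Fin n, fs i.succ x :=
      Finset.measurable_sum _ fun i _ => hm i.succ
    have hdt : DisjSupp fun i : Fin n => fs i.succ := fun i j hij x =>
      hd i.succ j.succ (fun h => hij (Fin.succ_injective n h)) x
    have hdisj : Disj (fs 0) (fun x => ∑ i : Fin n, fs i.succ x) := by
      intro x
      by_cases h : fs 0 x = 0
      · exact Or.inl h
      · refine Or.inr (Finset.sum_eq_zero fun i _ => ?_)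
        exact (hd i.succ 0 (Fin.succ_ne_zero i) x).resolve_right h
    rw [hsum, Fin.sum_univ_succ]
    calc Y0 X p q (fs 0) ^ q + ∑ i : Fin n, Y0 X p q (fs i.succ) ^ q
        ≤ Y0 X p q (fs 0) ^ q + Y0 X p q (fun x => ∑ i : Fin n, fs i.succ x) ^ q :=
          add_le_add le_rfl (IH _ (fun i => hm i.succ) hdt)
      _ ≤ Y0 X p q (fun x => fs 0 x + ∑ i : Fin n, fs i.succ x) ^ q :=
          Y0_lower hq (hm 0) hmt hdisj


end Renorm3

open Renorm3 in
theorem renorm_exact_upper_lower_estimates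
    {Ω : Type*} [TopologicalSpace Ω] [CompactSpace Ω] [T2Space Ω]
    [MeasurableSpace Ω] [BorelSpace Ω]
    (p q a b : ℝ) (hp : 0 < p) (hpq : p < q)
    (X : AdmissibleQuasinorm Ω)
    (hXa : CrudeUpper X p a) (hXb : CrudeLower X q b) :
    ∃ Y : AdmissibleQuasinorm Ω,
      CrudeUpper Y p 1 ∧ CrudeLower Y q 1 ∧
      ∀ f : Ω → ℝ, Measurable f →
        X.N f ≤ Y.N f ∧ Y.N f ≤ ENNReal.ofReal (a * b) * X.N f := by
  classical
  have hq : 0 < q := hp.trans hpq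
  have G := good_Www hp hXa
  obtain ⟨u, hu, hu0, hupos, hutop⟩ := X.exists_pos
  -- the constants are at least one
  have hsing : ∀ i : Fin 1, Measurable ((fun _ : Fin 1 => u) i) := fun _ => hu
  have hdsing : DisjSupp (fun _ : Fin 1 => u) := fun i j hij =>
    absurd (Subsingleton.elim i j) hij
  have ha1 : 1 ≤ ENNReal.ofReal a := by
    have h := hXa 1 (fun _ => u) hsing hdsing
    simp only [Fin.sum_univ_one] at h
    rw [rpow_rpow_inv _ hp.ne'] at h
    by_contra hlt
    push_neg at hlt
    have := (ENNReal.mul_lt_mul_iff_left hupos.ne' hutop.ne).2 hlt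
    rw [one_mul] at this
    exact absurd h (not_le.2 this)
  have hb1 : 1 ≤ ENNReal.ofReal b := by
    have h := hXb 1 (fun _ => u) hsing hdsing
    simp only [Fin.sum_univ_one] at h
    rw [rpow_rpow_inv _ hq.ne'] at h
    by_contra hlt
    push_neg at hlt
    have := (ENNReal.mul_lt_mul_iff_left hupos.ne' hutop.ne).2 hlt
    rw [one_mul] at this
    exact absurd h (not_le.2 this)
  have ha0 : 0 ≤ a := le_of_lt (ENNReal.ofReal_pos.1 (lt_of_lt_of_le zero_lt_one ha1))
  set k : ℝ≥0∞ := ENNReal.ofReal a with hk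
  have hk0 : k ≠ 0 := by
    intro h
    rw [h] at ha1
    exact absurd ha1 (by simp)
  have hktop : k ≠ ⊤ := ENNReal.ofReal_ne_top
  set YN : (Ω → ℝ) → ℝ≥0∞ := fun f => k * Y0 X p q f with hYN
  -- basic facts
  have hYmono : ∀ ⦃f g : Ω → ℝ⦄, Measurable f → Measurable g → (∀ x, |f x| ≤ |g x|) →
      YN f ≤ YN g := fun f g hf hg h => mul_le_mul_right (Y0_mono hp hq hXa hf hg h) k
  have hXleY : ∀ ⦃f : Ω → ℝ⦄, Measurable f → X.N f ≤ YN f := by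
    intro f hf
    exact le_trans (G.X_le hf) (mul_le_mul_right (Www_le_Y0 hq hf) k)
  have hYleX : ∀ ⦃f : Ω → ℝ⦄, Measurable f → YN f ≤ ENNReal.ofReal (a * b) * X.N f := by
    intro f hf
    calc YN f ≤ k * (ENNReal.ofReal b * X.N f) :=
          mul_le_mul_right (Y0_le_bX hp hq hXa hXb hf) k
      _ = ENNReal.ofReal (a * b) * X.N f := by
          rw [ENNReal.ofReal_mul ha0, mul_assoc]
  have hYupper : ∀ ⦃f g : Ω → ℝ⦄, Measurable f → Measurable g → Disj f g →
      YN (fun x => f x + g x) ^ p ≤ YN f ^ p + YN g ^ p := by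
    intro f g hf hg hd
    calc YN (fun x => f x + g x) ^ p
        = k ^ p * Y0 X p q (fun x => f x + g x) ^ p := by
          rw [hYN, ENNReal.mul_rpow_of_nonneg _ _ hp.le]
      _ ≤ k ^ p * (Y0 X p q f ^ p + Y0 X p q g ^ p) :=
          mul_le_mul_right (Y0_upper hp hq hpq hXa hf hg hd) _
      _ = YN f ^ p + YN g ^ p := by
          rw [mul_add, hYN, ENNReal.mul_rpow_of_nonneg _ _ hp.le,
            ENNReal.mul_rpow_of_nonneg _ _ hp.le]
  -- the admissible quasinorm
  refine ⟨⟨YN, ?_, ?_, ?_, ?_, ?_⟩, ?_, ?_, ?_⟩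
  · exact fun f g hf hg h => hYmono hf hg h
  · intro c f hf
    rw [hYN]
    show k * Y0 X p q (fun x => c * f x) = ENNReal.ofReal |c| * (k * Y0 X p q f)
    rw [Y0_smul hp hq hXa c f hf, mul_left_comm]
  · -- quasi-triangle inequality
    refine ⟨(2 : ℝ≥0∞) ^ (1 / p), fun f g hf hg hf0 hg0 hd => ?_⟩
    have h1 := hYupper hf hg hd
    have h2 : YN f ^ p + YN g ^ p ≤ 2 * (YN f + YN g) ^ p := by
      rw [two_mul]
      exact add_le_add (ENNReal.rpow_le_rpow (le_add_right le_rfl) hp.le)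
        (ENNReal.rpow_le_rpow (le_add_left le_rfl) hp.le)
    calc YN (fun x => f x + g x)
        = (YN (fun x => f x + g x) ^ p) ^ (1 / p) := (rpow_rpow_inv _ hp.ne').symm
      _ ≤ (2 * (YN f + YN g) ^ p) ^ (1 / p) :=
          ENNReal.rpow_le_rpow (le_trans h1 h2) (by positivity)
      _ = (2 : ℝ≥0∞) ^ (1 / p) * (YN f + YN g) := by
          rw [ENNReal.mul_rpow_of_nonneg _ _ (by positivity), rpow_rpow_inv _ hp.ne']
  · -- exists_pos
    refine ⟨u, hu, hu0, ?_, ?_⟩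
    · exact lt_of_lt_of_le hupos (hXleY hu)
    · refine lt_of_le_of_lt (hYleX hu) ?_
      exact ENNReal.mul_lt_top ENNReal.ofReal_lt_top hutop
  · -- continuity from below
    intro f g hfm hg h0 hstep htend
    have hY0mono : Monotone fun n => Y0 X p q (f n) := monotone_nat_of_le_succ fun n =>
      Y0_mono hp hq hXa (hfm n) (hfm (n+1)) fun x => by
        rw [abs_of_nonneg (h0 n x), abs_of_nonneg (h0 (n+1) x)]
        exact hstep n x
    have h1 : Tendsto (fun n => Y0 X p q (f n)) atTop (𝓝 (Y0 X p q g)) := by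
      have := tendsto_atTop_iSup hY0mono
      rwa [Y0_iSup hp hq hXa hfm hg h0 hstep htend] at this
    exact ENNReal.Tendsto.const_mul h1 (Or.inr hktop)
  · -- crude upper estimate with constant 1
    intro n fs hm hd
    show YN (fun x => ∑ i, fs i x) ≤ ENNReal.ofReal 1 * (∑ i, YN (fs i) ^ p) ^ (1 / p)
    rw [ENNReal.ofReal_one, one_mul]
    have hkey : YN (fun x => ∑ i, fs i x) ^ p ≤ ∑ i, YN (fs i) ^ p := by
      calc YN (fun x => ∑ i, fs i x) ^ p
          = k ^ p * Y0 X p q (fun x => ∑ i, fs i x) ^ p := by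
            rw [hYN, ENNReal.mul_rpow_of_nonneg _ _ hp.le]
        _ ≤ k ^ p * ∑ i, Y0 X p q (fs i) ^ p :=
            mul_le_mul_right (Y0_nary_upper hp hq hpq hXa hm hd) _
        _ = ∑ i, YN (fs i) ^ p := by
            rw [Finset.mul_sum]
            exact Finset.sum_congr rfl fun i _ => by
              rw [hYN, ENNReal.mul_rpow_of_nonneg _ _ hp.le]
    calc YN (fun x => ∑ i, fs i x)
        = (YN (fun x => ∑ i, fs i x) ^ p) ^ (1 / p) := (rpow_rpow_inv _ hp.ne').symm
      _ ≤ (∑ i, YN (fs i) ^ p) ^ (1 / p) := ENNReal.rpow_le_rpow hkey (by positivity)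
  · -- crude lower estimate with constant 1
    intro n fs hm hd
    show (∑ i, YN (fs i) ^ q) ^ (1 / q) ≤ ENNReal.ofReal 1 * YN (fun x => ∑ i, fs i x)
    rw [ENNReal.ofReal_one, one_mul]
    have hkey : (∑ i, YN (fs i) ^ q) ≤ YN (fun x => ∑ i, fs i x) ^ q := by
      calc (∑ i, YN (fs i) ^ q)
          = k ^ q * ∑ i, Y0 X p q (fs i) ^ q := by
            rw [Finset.mul_sum]
            exact Finset.sum_congr rfl fun i _ => by
              rw [hYN, ENNReal.mul_rpow_of_nonneg _ _ hq.le]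
        _ ≤ k ^ q * Y0 X p q (fun x => ∑ i, fs i x) ^ q :=
            mul_le_mul_right (Y0_nary_lower hp hq hXa n fs hm hd) _
        _ = YN (fun x => ∑ i, fs i x) ^ q := by
            rw [hYN, ENNReal.mul_rpow_of_nonneg _ _ hq.le]
    calc (∑ i, YN (fs i) ^ q) ^ (1 / q)
        ≤ (YN (fun x => ∑ i, fs i x) ^ q) ^ (1 / q) :=
          ENNReal.rpow_le_rpow hkey (by positivity)
      _ = YN (fun x => ∑ i, fs i x) := rpow_rpow_inv _ hq.ne'
  · -- equivalence with the original quasinorm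
    intro f hf
    exact ⟨hXleY hf, hYleX hf⟩
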